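/- Under the hypotheses of the pseudolinearization lemma, if two vector fields V and Ṽ on ℝⁿ have flows that agree at a particular endpoint, i.e., X̃(t, z₀) = X(t, z₀) for some initial condition z₀ and time t > 0 for which both flows exist on [0, t], then ∫₀ᵗ (∂X̃/∂X⁰)(t − s, X(s, z₀)) (Ṽ − V)(X(s, z₀)) ds = 0. -/

import Mathlib

noncomputable section

open Set Filter Asymptotics

variable {E : Type*} [NormedAddCommGroup E] [NormedSpace ℝ E]

/-- Global uniqueness for autonomous C¹ ODEs. -/
theorem flow_unique {W : E → E} (hW : ContDiff ℝ 1 W) {f g : ℝ → E}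
    (hf : ∀ τ, HasDerivAt f (W (f τ)) τ) (hg : ∀ τ, HasDerivAt g (W (g τ)) τ)
    {t₀ : ℝ} (h0 : f t₀ = g t₀) : f = g := by
  have hfc : Continuous f := continuous_iff_continuousAt.2 fun τ => (hf τ).continuousAt
  have hgc : Continuous g := continuous_iff_continuousAt.2 fun τ => (hg τ).continuousAt
  have hcl : IsClosed {τ | f τ = g τ} := isClosed_eq hfc hgc
  have hop : IsOpen {τ | f τ = g τ} := by
    rw [isOpen_iff_mem_nhds]
    intro τ₀ hτ₀
    obtain ⟨K, s, hs, hKs⟩ := (hW.contDiffAt (x := f τ₀)).exists_lipschitzOnWith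
    have huniq : f =ᶠ[nhds τ₀] g := by
      refine ODE_solution_unique_of_eventually (v := fun _ => W) (s := fun _ => s)
        (Filter.Eventually.of_forall fun _ => hKs) ?_ ?_ hτ₀
      · filter_upwards [hfc.continuousAt.preimage_mem_nhds hs] with τ hτ
        exact ⟨hf τ, hτ⟩
      · filter_upwards [hgc.continuousAt.preimage_mem_nhds (hτ₀ ▸ hs)] with τ hτ
        exact ⟨hg τ, hτ⟩
    exact huniq
  have : {τ | f τ = g τ} = univ := IsClopen.eq_univ ⟨hcl, hop⟩ ⟨t₀, h0⟩
  funext τ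
  exact (Set.eq_univ_iff_forall.1 this) τ

section Group
variable {W : E → E} {Y : ℝ → E → E} {DY : ℝ → E → (E →L[ℝ] E)}

/-- Group law for the flow. -/
theorem flow_group (hW : ContDiff ℝ 1 W) (hY0 : ∀ z, Y 0 z = z)
    (hYflow : ∀ τ z, HasDerivAt (fun τ' => Y τ' z) (W (Y τ z)) τ)
    (a b : ℝ) (z : E) : Y (a + b) z = Y a (Y b z) := by
  have key : (fun a => Y (a + b) z) = fun a => Y a (Y b z) := by
    refine flow_unique hW (f := fun a => Y (a + b) z) (g := fun a => Y a (Y b z))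
      (fun τ => ?_) (fun τ => hYflow τ (Y b z)) (t₀ := 0) (by simp [hY0])
    have h1 : HasDerivAt (fun a : ℝ => a + b) 1 τ := (hasDerivAt_id τ).add_const b
    have := (hYflow (τ + b) z).scomp τ h1
    simpa [Function.comp_def] using this
  exact congrFun key a

/-- Pushforward identity: the flow map pushes `W` forward to itself. -/
theorem flow_pushforward (hW : ContDiff ℝ 1 W) (hY0 : ∀ z, Y 0 z = z)
    (hYflow : ∀ τ z, HasDerivAt (fun τ' => Y τ' z) (W (Y τ z)) τ)
    (hDY : ∀ τ z, HasFDerivAt (fun z' => Y τ z') (DY τ z) z)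
    (τ : ℝ) (z : E) : W (Y τ z) = DY τ z (W z) := by
  have h1 : HasDerivAt (fun s : ℝ => Y (τ + s) z) (W (Y τ z)) 0 := by
    have hs : HasDerivAt (fun s : ℝ => τ + s) 1 0 := (hasDerivAt_id 0).const_add τ
    have := (hYflow (τ + 0) z).scomp 0 hs
    simpa [Function.comp_def] using this
  have h2 : HasDerivAt (fun s : ℝ => Y τ (Y s z)) (DY τ z (W z)) 0 := by
    have := (hDY τ (Y 0 z)).comp_hasDerivAt 0 (hYflow 0 z)
    simpa [hY0, Function.comp_def] using this
  have heq : (fun s : ℝ => Y (τ + s) z) = fun s : ℝ => Y τ (Y s z) := by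
    funext s; rw [flow_group hW hY0 hYflow τ s z]
  rw [heq] at h1
  exact h1.unique h2

end Group

/-- A curve with speed ≤ M while near p stays near p for short times. -/
theorem stay_curve {p : E} {δ₁ M : ℝ} (hδ₁ : 0 < δ₁) (hM : 0 < M)
    {φ ψ : ℝ → E} (hφ : ∀ r, HasDerivAt φ (ψ r) r)
    (hbd : ∀ r, ‖φ r - p‖ ≤ δ₁ → ‖ψ r‖ ≤ M)
    (h0 : ‖φ 0 - p‖ ≤ min (δ₁ / 4) (δ₁ / (2 * M))) :
    ∀ r ∈ Icc (0:ℝ) (min (δ₁ / 4) (δ₁ / (2 * M))), ‖φ r - p‖ ≤ δ₁ := by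
  set δ : ℝ := min (δ₁ / 4) (δ₁ / (2 * M)) with hδdef
  have hδ4 : δ ≤ δ₁ / 4 := min_le_left _ _
  have hδM : δ ≤ δ₁ / (2 * M) := min_le_right _ _
  have hδpos : 0 < δ := lt_min (by linarith) (by positivity)
  by_contra hcon
  push_neg at hcon
  obtain ⟨r₁, hr₁, hr₁'⟩ := hcon
  have hφc : Continuous φ := continuous_iff_continuousAt.2 fun τ => (hφ τ).continuousAt
  set B : Set ℝ := {r ∈ Icc (0:ℝ) δ | δ₁ ≤ ‖φ r - p‖} with hB
  have hBne : B.Nonempty := ⟨r₁, hr₁, hr₁'.le⟩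
  have hBcl : IsClosed B :=
    isClosed_Icc.inter (isClosed_le continuous_const (hφc.sub continuous_const).norm)
  have hBbdd : BddBelow B := ⟨0, fun r hr => hr.1.1⟩
  set r₀ : ℝ := sInf B with hr₀def
  have hr₀B : r₀ ∈ B := hBcl.csInf_mem hBne hBbdd
  have hr₀pos : 0 < r₀ := by
    rcases hr₀B.1.1.lt_or_eq with h | h
    · exact h
    · exfalso
      have h2 := hr₀B.2
      rw [← h] at h2
      have : δ < δ₁ := by linarith
      linarith [h0.trans_lt this]
  have hlt : ∀ r, 0 ≤ r → r < r₀ → ‖φ r - p‖ < δ₁ := by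
    intro r h1 h2
    by_contra hge
    push_neg at hge
    have : r ∈ B := ⟨⟨h1, h2.le.trans hr₀B.1.2⟩, hge⟩
    exact absurd (csInf_le hBbdd this) (not_le.2 h2)
  have hin : ∀ r ∈ Icc (0:ℝ) r₀, ‖φ r - p‖ ≤ δ₁ := by
    intro r hr
    rcases hr.2.lt_or_eq with h | h
    · exact (hlt r hr.1 h).le
    · subst h
      refine le_of_tendsto (f := fun r => ‖φ r - p‖) (x := nhdsWithin r₀ (Iio r₀))
        (((hφc.sub continuous_const).norm.continuousAt).mono_left nhdsWithin_le_nhds) ?_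
      filter_upwards [eventually_nhdsWithin_of_eventually_nhds
        (eventually_gt_nhds hr₀pos), self_mem_nhdsWithin] with r' h1 h2
      exact (hlt r' h1.le h2).le
  have hmvt : ‖φ r₀ - φ 0‖ ≤ M * ‖r₀ - 0‖ := by
    refine (convex_Icc (0:ℝ) r₀).norm_image_sub_le_of_norm_hasDerivWithin_le
      (fun r hr => (hφ r).hasDerivWithinAt) (fun r hr => hbd r (hin r hr)) ?_ ?_
    · exact ⟨le_rfl, hr₀pos.le⟩
    · exact ⟨hr₀pos.le, le_rfl⟩
  have hMr : M * r₀ ≤ δ₁ / 2 := by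
    have : r₀ ≤ δ₁ / (2 * M) := hr₀B.1.2.trans hδM
    calc M * r₀ ≤ M * (δ₁ / (2 * M)) := by nlinarith
    _ = δ₁ / 2 := by field_simp
  have : δ₁ ≤ ‖φ r₀ - p‖ := hr₀B.2
  have h4 : ‖φ r₀ - p‖ ≤ ‖φ r₀ - φ 0‖ + ‖φ 0 - p‖ := norm_sub_le_norm_sub_add_norm_sub _ _ _
  rw [sub_zero, Real.norm_of_nonneg hr₀pos.le] at hmvt
  linarith

/-- Joint continuity of the flow at time `0`, quantitative form. -/
theorem flow_stay {W : E → E} {Y : ℝ → E → E} (hWc : Continuous W)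
    (hY0 : ∀ z, Y 0 z = z)
    (hYflow : ∀ τ z, HasDerivAt (fun τ' => Y τ' z) (W (Y τ z)) τ)
    (p : E) {ε : ℝ} (hε : 0 < ε) :
    ∃ δ > 0, ∀ a r, ‖a - p‖ ≤ δ → |r| ≤ δ → ‖Y r a - p‖ ≤ ε := by
  obtain ⟨δ₁', hδ₁', hδ₁'W⟩ := Metric.continuousAt_iff.1 hWc.continuousAt 1 one_pos
  set δ₁ : ℝ := min ε (δ₁' / 2) with hδ₁def
  have hδ₁pos : 0 < δ₁ := lt_min hε (by linarith)
  set M : ℝ := ‖W p‖ + 1 with hMdef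
  have hMpos : 0 < M := by positivity
  have hbdW : ∀ x : E, ‖x - p‖ ≤ δ₁ → ‖W x‖ ≤ M := by
    intro x hx
    have : dist x p < δ₁' := by
      rw [dist_eq_norm]
      calc ‖x - p‖ ≤ δ₁ := hx
      _ ≤ δ₁' / 2 := min_le_right _ _
      _ < δ₁' := by linarith
    have := hδ₁'W this
    rw [dist_eq_norm] at this
    calc ‖W x‖ ≤ ‖W x - W p‖ + ‖W p‖ := by simpa using norm_add_le (W x - W p) (W p)
    _ ≤ 1 + ‖W p‖ := by linarith
    _ = M := by ring
  set δ : ℝ := min (δ₁ / 4) (δ₁ / (2 * M)) with hδdef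
  have hδpos : 0 < δ := lt_min (by linarith) (by positivity)
  refine ⟨δ, hδpos, fun a r ha hr => ?_⟩
  have hδ₁ε : δ₁ ≤ ε := min_le_left _ _
  rcases le_or_gt 0 r with h | h
  · have := stay_curve (φ := fun r => Y r a) (ψ := fun r => W (Y r a)) hδ₁pos hMpos
      (fun r => hYflow r a) (fun r hr => hbdW _ hr)
      (by show ‖Y 0 a - p‖ ≤ _; rw [hY0]; exact ha) r ⟨h, (abs_le.1 hr).2⟩
    exact this.trans hδ₁ε
  · have hφ : ∀ s : ℝ, HasDerivAt (fun s => Y (-s) a) (-W (Y (-s) a)) s := by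
      intro s
      have := (hYflow (-s) a).scomp s (hasDerivAt_neg s)
      simpa [Function.comp_def] using this
    have := stay_curve (φ := fun s => Y (-s) a) (ψ := fun s => -W (Y (-s) a)) hδ₁pos hMpos
      hφ (fun s hs => by rw [norm_neg]; exact hbdW _ hs)
      (by show ‖Y (-0) a - p‖ ≤ _; rw [neg_zero, hY0]; exact ha) (-r) ⟨by linarith, by linarith [(abs_le.1 hr).1]⟩
    simpa using this.trans hδ₁ε


open intervalIntegral MeasureTheory in
/-- If the flows of two `C¹` vector fields `V`, `W` on ℝⁿ agree at an endpoint,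
`Y t z₀ = X t z₀`, then the weighted integral of the difference of the vector fields along the
flow of `V` vanishes:
`∫₀ᵗ DY (t−s) (X s z₀) ((W − V)(X s z₀)) ds = 0`. -/
theorem flow_agree_integral_zero {n : ℕ}
    (V W : EuclideanSpace ℝ (Fin n) → EuclideanSpace ℝ (Fin n))
    (X Y : ℝ → EuclideanSpace ℝ (Fin n) → EuclideanSpace ℝ (Fin n))
    (DY : ℝ → EuclideanSpace ℝ (Fin n) →
      (EuclideanSpace ℝ (Fin n) →L[ℝ] EuclideanSpace ℝ (Fin n)))
    (hV : ContDiff ℝ 1 V) (hW : ContDiff ℝ 1 W)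
    (hX0 : ∀ z, X 0 z = z) (hY0 : ∀ z, Y 0 z = z)
    (hXflow : ∀ τ z, HasDerivAt (fun τ' => X τ' z) (V (X τ z)) τ)
    (hYflow : ∀ τ z, HasDerivAt (fun τ' => Y τ' z) (W (Y τ z)) τ)
    (hDY : ∀ τ z, HasFDerivAt (fun z' => Y τ z') (DY τ z) z)
    (t : ℝ) (ht : 0 < t) (z₀ : EuclideanSpace ℝ (Fin n))
    (hEq : Y t z₀ = X t z₀) :
    ∫ s in (0:ℝ)..t, DY (t - s) (X s z₀) (W (X s z₀) - V (X s z₀)) = 0 := by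
  have hWc : Continuous W := hW.continuous
  have hYτc : ∀ z, Continuous (fun τ => Y τ z) :=
    fun z => continuous_iff_continuousAt.2 fun τ => (hYflow τ z).continuousAt
  -- integral representation of the flow
  have hrep : ∀ a (r : ℝ), Y r a - a = ∫ τ in (0:ℝ)..r, W (Y τ a) := by
    intro a r
    have := intervalIntegral.integral_eq_sub_of_hasDerivAt
      (f := fun τ => Y τ a) (f' := fun τ => W (Y τ a)) (a := 0) (b := r)
      (fun τ _ => hYflow τ a) ((hWc.comp (hYτc a)).intervalIntegrable 0 r)
    rw [this]; simp [hY0]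
  set g := fun s => Y (t - s) (X s z₀) with hgdef
  -- Step A: derivative of g
  have hg' : ∀ s : ℝ, HasDerivAt g
      (DY (t - s) (X s z₀) (V (X s z₀) - W (X s z₀))) s := by
    intro s
    set x := X s z₀ with hxdef
    set p := Y (t - s) x with hpdef
    set u := fun σ => Y (t - s) (X σ z₀) with hudef
    have hu : HasDerivAt u (DY (t - s) x (V x)) s :=
      (hDY (t - s) x).comp_hasDerivAt s (hXflow s z₀)
    have hus : u s = p := rfl
    have hgu : ∀ σ, g σ = Y (s - σ) (u σ) := by
      intro σ
      have : t - σ = (s - σ) + (t - s) := by ring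
      rw [hgdef]
      simp only [this]
      exact flow_group hW hY0 hYflow (s - σ) (t - s) (X σ z₀)
    have key : HasDerivAt g (DY (t - s) x (V x) - W p) s := by
      rw [hasDerivAt_iff_isLittleO]
      have h1 : (fun σ => u σ - u s - (σ - s) • (DY (t - s) x (V x)))
          =o[nhds s] (fun σ => σ - s) := hasDerivAt_iff_isLittleO.1 hu
      have h2 : (fun σ => Y (s - σ) (u σ) - u σ + (σ - s) • (W p))
          =o[nhds s] (fun σ => σ - s) := by
        rw [Asymptotics.isLittleO_iff]
        intro c hc
        obtain ⟨ε₂', hε₂', hWp⟩ := Metric.continuousAt_iff.1 hWc.continuousAt c hc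
        set ε₂ : ℝ := ε₂' / 2 with hε₂def
        have hε₂pos : 0 < ε₂ := by linarith
        obtain ⟨δ, hδpos, hδ⟩ := flow_stay hWc hY0 hYflow p hε₂pos
        have hucont : ContinuousAt u s := hu.continuousAt
        have hev1 : ∀ᶠ σ in nhds s, ‖u σ - p‖ ≤ δ := by
          have h2 : Filter.Tendsto (fun σ => ‖u σ - p‖) (nhds s) (nhds ‖u s - p‖) :=
            ((hucont.sub continuousAt_const).norm)
          rw [hus, sub_self, norm_zero] at h2
          filter_upwards [h2.eventually_lt_const hδpos] with σ hσ
          exact hσ.le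
        have hev2 : ∀ᶠ σ in nhds s, |σ - s| ≤ δ := by
          have h2 : Filter.Tendsto (fun σ : ℝ => |σ - s|) (nhds s) (nhds |s - s|) :=
            ((continuousAt_id.sub continuousAt_const).abs)
          rw [sub_self, abs_zero] at h2
          filter_upwards [h2.eventually_lt_const hδpos] with σ hσ
          exact hσ.le
        filter_upwards [hev1, hev2] with σ hσ1 hσ2
        have hWb : ∀ τ ∈ Set.uIoc (0:ℝ) (s - σ), ‖W (Y τ (u σ)) - W p‖ ≤ c := by
          intro τ hτ
          have habs : |τ| ≤ |s - σ| := by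
            rcases Set.mem_uIoc.1 hτ with ⟨h1, h2⟩ | ⟨h1, h2⟩ <;>
              rw [abs_le] <;> constructor <;>
              [linarith [abs_nonneg (s - σ), neg_abs_le (s - σ)];
               linarith [le_abs_self (s - σ)];
               linarith [neg_abs_le (s - σ)];
               linarith [abs_nonneg (s - σ), le_abs_self (s - σ)]]
          have hτδ : |τ| ≤ δ := habs.trans (by rwa [abs_sub_comm] at hσ2)
          have hY : ‖Y τ (u σ) - p‖ ≤ ε₂ := hδ (u σ) τ hσ1 hτδ
          have : dist (Y τ (u σ)) p < ε₂' := by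
            rw [dist_eq_norm]; linarith
          have := hWp this
          rw [dist_eq_norm] at this
          exact this.le
        have hint1 : IntervalIntegrable (fun τ => W (Y τ (u σ))) volume 0 (s - σ) :=
          (hWc.comp (hYτc (u σ))).intervalIntegrable 0 (s - σ)
        have hint2 : IntervalIntegrable (fun _ : ℝ => W p) volume 0 (s - σ) :=
          intervalIntegrable_const
        have hρ : Y (s - σ) (u σ) - u σ + (σ - s) • (W p)
            = ∫ τ in (0:ℝ)..(s - σ), (W (Y τ (u σ)) - W p) := by
          rw [intervalIntegral.integral_sub hint1 hint2, ← hrep (u σ) (s - σ),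
            intervalIntegral.integral_const]
          module
        rw [hρ]
        have := intervalIntegral.norm_integral_le_of_norm_le_const
          (C := c) (f := fun τ => W (Y τ (u σ)) - W p) (a := (0:ℝ)) (b := s - σ) hWb
        calc ‖∫ τ in (0:ℝ)..(s - σ), (W (Y τ (u σ)) - W p)‖ ≤ c * |s - σ - 0| := this
        _ = c * ‖σ - s‖ := by rw [sub_zero, Real.norm_eq_abs, abs_sub_comm]
      have heq : (fun σ => g σ - g s - (σ - s) • (DY (t - s) x (V x) - W p))
          = fun σ => (u σ - u s - (σ - s) • (DY (t - s) x (V x)))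
            + (Y (s - σ) (u σ) - u σ + (σ - s) • (W p)) := by
        funext σ
        rw [hgu σ, hgu s]
        simp only [sub_self, hY0, hus]
        module
      rw [heq]
      exact h1.add h2
    have hWpush : W p = DY (t - s) x (W x) :=
      flow_pushforward hW hY0 hYflow hDY (t - s) x
    rw [hWpush, ← map_sub] at key
    exact key
  -- Step B: fundamental theorem of calculus
  have hneg : (fun s => DY (t - s) (X s z₀) (V (X s z₀) - W (X s z₀)))
      = fun s => -(DY (t - s) (X s z₀) (W (X s z₀) - V (X s z₀))) := by
    funext s; rw [← map_neg, neg_sub]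
  by_cases hInt : IntervalIntegrable
      (fun s => DY (t - s) (X s z₀) (W (X s z₀) - V (X s z₀))) volume 0 t
  · have hInt' : IntervalIntegrable
        (fun s => DY (t - s) (X s z₀) (V (X s z₀) - W (X s z₀))) volume 0 t := by
      rw [hneg]; exact hInt.neg
    have hftc := intervalIntegral.integral_eq_sub_of_hasDerivAt
      (f := g) (f' := fun s => DY (t - s) (X s z₀) (V (X s z₀) - W (X s z₀)))
      (fun s _ => hg' s) hInt'
    have hgt : g t = X t z₀ := by rw [hgdef]; simp only [sub_self, hY0]
    have hg0 : g 0 = X t z₀ := by rw [hgdef]; simp only [sub_zero, hX0, hEq]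
    rw [hgt, hg0, sub_self, hneg, intervalIntegral.integral_neg, neg_eq_zero] at hftc
    exact hftc
  · exact intervalIntegral.integral_undef hInt
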